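/- Let g ≥ 2, a, a' positive integers with gcd(g,a) = gcd(a,a') = 1, and D = {d₁,…,d_t} ⊆ {0,…,g−1} with t ≥ 2, d₁ < ⋯ < d_t. If δ := gcd(a·a', d₂−d₁,…,d_t−d₁) = 1, then for every (b,b') ∈ Z_a × Z_{a'} and every i ≥ 1, there exists a word w over D whose length is a positive multiple of p := a'·φ(a(g−1)), such that g^i·(w)_g ≡ b (mod a) and S_g(w) ≡ b' (mod a'). -/

import Mathlib

private lemma repl_flatten_sum (v : ℕ → ℕ) (E : List ℕ) :
    ∀ n : ℕ, (((List.replicate n E).flatten).map v).sum = n * (E.map v).sum := by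
  intro n
  induction n with
  | zero => simp
  | succ n ih => simp [List.replicate_succ, ih]; ring

private lemma map_sum_shift (v f : ℕ → ℕ) (r : ℕ) :
    ∀ E : List ℕ, (∀ e ∈ E, f e = v e + r) →
      (E.map f).sum = (E.map v).sum + E.length * r := by
  intro E
  induction E with
  | nil => simp
  | cons e E ih =>
      intro h
      simp only [List.map_cons, List.sum_cons, List.length_cons,
        h e (by simp), ih (fun x hx => h x (by simp [hx]))]
      ring

private lemma exists_list_gcd (N : ℕ) [NeZero N] (S : Finset ℕ) (v : ℕ → ℕ) :
    ∃ E : List ℕ, (∀ x ∈ E, x ∈ S) ∧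
      ((E.map v).sum : ZMod N) = ((S.gcd v : ℕ) : ZMod N) := by
  classical
  induction S using Finset.induction_on with
  | empty => exact ⟨[], by simp, by simp⟩
  | insert d S hd ih =>
      obtain ⟨E, hE, hsum⟩ := ih
      set x := v d
      set y := S.gcd v
      set A : ZMod N := ((Nat.gcdA x y : ℤ) : ZMod N) with hA
      set B : ZMod N := ((Nat.gcdB x y : ℤ) : ZMod N) with hB
      refine ⟨List.replicate A.val d ++ (List.replicate B.val E).flatten, ?_, ?_⟩
      · intro z hz
        rcases List.mem_append.mp hz with h | h
        · rw [List.eq_of_mem_replicate h]; exact Finset.mem_insert_self d S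
        · obtain ⟨bl, hbl, hz'⟩ := List.mem_flatten.mp h
          rw [List.eq_of_mem_replicate hbl] at hz'
          exact Finset.mem_insert_of_mem (hE z hz')
      · have hrep : ((List.replicate A.val d).map v).sum = A.val * x := by
          simp [List.map_replicate, List.sum_replicate, mul_comm, x]
        rw [List.map_append, List.sum_append, hrep, repl_flatten_sum]
        have hgcd : (((insert d S).gcd v : ℕ) : ℤ) = (x : ℤ) * Nat.gcdA x y + (y : ℤ) * Nat.gcdB x y := by
          rw [Finset.gcd_insert]
          exact_mod_cast Nat.gcd_eq_gcd_ab x y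
        have hcst : ((((insert d S).gcd v : ℕ) : ℤ) : ZMod N) = (((insert d S).gcd v : ℕ) : ZMod N) := by
          push_cast; ring
        rw [← hcst, hgcd]
        have hAval : ((A.val : ℕ) : ZMod N) = A := by
          rw [ZMod.natCast_val, ZMod.cast_id]
        have hBval : ((B.val : ℕ) : ZMod N) = B := by
          rw [ZMod.natCast_val, ZMod.cast_id]
        rw [Nat.cast_add, Nat.cast_mul, Nat.cast_mul, hsum, hAval, hBval, hA, hB]
        push_cast
        ring

private lemma exists_list_target (N : ℕ) [NeZero N] (S : Finset ℕ) (v : ℕ → ℕ)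
    (h : Nat.Coprime N (S.gcd v)) (c : ℕ) :
    ∃ E : List ℕ, (∀ x ∈ E, x ∈ S) ∧
      ((E.map v).sum : ZMod N) = (c : ZMod N) := by
  obtain ⟨E, hE, hsum⟩ := exists_list_gcd N S v
  have hu : IsUnit ((S.gcd v : ℕ) : ZMod N) :=
    (ZMod.isUnit_iff_coprime _ _).mpr h.symm
  obtain ⟨u, hu⟩ := hu
  set z : ZMod N := (c : ZMod N) * ((u⁻¹ : (ZMod N)ˣ) : ZMod N) with hz
  refine ⟨(List.replicate z.val E).flatten, ?_, ?_⟩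
  · intro x hx
    obtain ⟨bl, hbl, hx'⟩ := List.mem_flatten.mp hx
    rw [List.eq_of_mem_replicate hbl] at hx'
    exact hE x hx'
  · rw [repl_flatten_sum, Nat.cast_mul, hsum, ZMod.natCast_val, ZMod.cast_id, hz, ← hu]
    rw [mul_assoc, Units.inv_mul, mul_one]

private lemma dvd_geom_sum_aux (g a q : ℕ) (hg : 2 ≤ g)
    (h : g ^ q ≡ 1 [MOD a * (g - 1)]) :
    a ∣ ∑ j ∈ Finset.range q, g ^ j := by
  have hdvd : ((a * (g - 1) : ℕ) : ℤ) ∣ (g : ℤ) ^ q - 1 := by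
    have h2 := (Nat.modEq_iff_dvd).mp h
    have h3 : ((a * (g - 1) : ℕ) : ℤ) ∣ (1 : ℤ) - (g : ℤ) ^ q := by
      push_cast at h2 ⊢
      exact h2
    have h4 := dvd_sub_comm.mp h3
    push_cast at h4 ⊢
    exact h4
  have hcast : ((a * (g - 1) : ℕ) : ℤ) = (a : ℤ) * ((g : ℤ) - 1) := by
    push_cast [Nat.cast_sub (by omega : 1 ≤ g)]
    ring
  rw [hcast, ← geom_sum_mul (g : ℤ) q] at hdvd
  have hne : ((g : ℤ) - 1) ≠ 0 := by
    have : (2 : ℤ) ≤ (g : ℤ) := by exact_mod_cast hg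
    omega
  have : (a : ℤ) ∣ ∑ j ∈ Finset.range q, (g : ℤ) ^ j :=
    (mul_dvd_mul_iff_right hne).mp hdvd
  have hco : ((∑ j ∈ Finset.range q, g ^ j : ℕ) : ℤ) = ∑ j ∈ Finset.range q, (g : ℤ) ^ j := by
    push_cast; ring
  exact_mod_cast hco ▸ this

private lemma ofDigits_replicate (g d : ℕ) :
    ∀ n : ℕ, Nat.ofDigits g (List.replicate n d) = d * ∑ j ∈ Finset.range n, g ^ j := by
  intro n
  induction n with
  | zero => simp [Nat.ofDigits]
  | succ n ih =>
      rw [List.replicate_succ, Nat.ofDigits_cons, ih, geom_sum_succ]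
      ring

private lemma ofDigits_flatten_mod (g a q : ℕ) (hq : g ^ q ≡ 1 [MOD a]) :
    ∀ B : List (List ℕ), (∀ bl ∈ B, bl.length = q) →
      Nat.ofDigits g B.flatten ≡ (B.map (Nat.ofDigits g)).sum [MOD a] := by
  intro B
  induction B with
  | nil => intro _; rfl
  | cons bl B ih =>
      intro h
      rw [List.flatten_cons, Nat.ofDigits_append, h bl (by simp), List.map_cons, List.sum_cons]
      have h1 : g ^ q * Nat.ofDigits g B.flatten ≡ 1 * (B.map (Nat.ofDigits g)).sum [MOD a] :=
        hq.mul (ih (fun x hx => h x (by simp [hx])))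
      rw [one_mul] at h1
      exact Nat.ModEq.add_left _ h1

/-- Irreducibility: when `δ := gcd(a·a', d₂-d₁,…,d_t-d₁) = 1` and
`gcd(g,a) = gcd(a,a') = 1`, for every pair of residues `(b,b')` and every `i ≥ 1`
there is a word `w` over `D`, of length a positive multiple of
`p := a'·φ(a(g-1))`, with `g^i·(w)_g ≡ b (mod a)` and `S_g(w) ≡ b' (mod a')`. -/
theorem irreducibility_words (g a a' : ℕ) (hg : 2 ≤ g) (ha : 1 ≤ a) (ha' : 1 ≤ a')
    (hga : Nat.gcd g a = 1) (haa' : Nat.gcd a a' = 1)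
    (D : Finset ℕ) (hD : D.Nonempty) (hDsub : D ⊆ Finset.range g) (hcard : 2 ≤ D.card)
    (hδ : Nat.gcd (a * a') (D.gcd fun d => d - D.min' hD) = 1) :
    ∀ b < a, ∀ b' < a', ∀ i ≥ 1,
      ∃ w : List ℕ, (∀ d ∈ w, d ∈ D) ∧
        (∃ m : ℕ, 1 ≤ m ∧ w.length = m * (a' * Nat.totient (a * (g - 1)))) ∧
        g ^ i * Nat.ofDigits g w ≡ b [MOD a] ∧
        w.sum ≡ b' [MOD a'] := by
  intro b hb b' hb' i hi
  set d₀ := D.min' hD with hd₀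
  set q := Nat.totient (a * (g - 1)) with hqdef
  set N := a * a' with hN
  haveI : NeZero N := ⟨by positivity⟩
  have hq0 : 0 < q := Nat.totient_pos.mpr (Nat.mul_pos (by omega) (by omega))
  have hgg1 : Nat.Coprime g (g - 1) := by
    have h1 : g - 1 + 1 = g := by omega
    rw [← h1]; simp
  have hgcop : Nat.Coprime g (a * (g - 1)) := Nat.Coprime.mul_right hga hgg1
  have heuler : g ^ q ≡ 1 [MOD a * (g - 1)] := Nat.ModEq.pow_totient hgcop
  have hqa : g ^ q ≡ 1 [MOD a] := heuler.of_dvd (Dvd.intro _ rfl)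
  -- the geometric sum divisibility
  have haG : a ∣ ∑ j ∈ Finset.range q, g ^ j := dvd_geom_sum_aux g a q hg heuler
  -- choose the target residue c by CRT
  obtain ⟨c, hca, hca'⟩ := Nat.chineseRemainder haa' (b * g ^ (i * (q - 1))) b'
  -- choose the list E of extra digits
  obtain ⟨E, hE, hEsum⟩ :=
    exists_list_target N D (fun d => d - d₀) hδ c
  have hSc : (E.map (fun d => d - d₀)).sum ≡ c [MOD N] :=
    (ZMod.natCast_eq_natCast_iff _ _ _).mp hEsum
  set S := (E.map (fun d => d - d₀)).sum with hS
  set K := E.length with hK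
  set m := K + 1 with hm
  have hKm : K ≤ m * a' := by
    have : m ≤ m * a' := Nat.le_mul_of_pos_right m (by omega)
    omega
  have hd₀D : d₀ ∈ D := Finset.min'_mem D hD
  have hEd₀ : ∀ e ∈ E, d₀ ≤ e := fun e he => Finset.min'_le D e (hE e he)
  -- the word
  set pad : List ℕ := List.replicate q d₀ with hpad
  set blockfn : ℕ → List ℕ := fun e => e :: List.replicate (q - 1) d₀ with hblockfn
  set blocks : List (List ℕ) := E.map blockfn ++ List.replicate (m * a' - K) pad with hblocks
  set w : List ℕ := blocks.flatten with hw
  have hlenbl : ∀ bl ∈ blocks, bl.length = q := by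
    intro bl hbl
    rcases List.mem_append.mp hbl with h | h
    · obtain ⟨e, _, rfl⟩ := List.mem_map.mp h
      simp [hblockfn]; omega
    · rw [List.eq_of_mem_replicate h]; simp [hpad]
  have hblockslen : blocks.length = m * a' := by
    simp [hblocks]; omega
  refine ⟨w, ?_, ⟨m, by omega, ?_⟩, ?_, ?_⟩
  · -- digits in D
    intro d hd
    obtain ⟨bl, hbl, hd'⟩ := List.mem_flatten.mp hd
    rcases List.mem_append.mp hbl with h | h
    · obtain ⟨e, he, rfl⟩ := List.mem_map.mp h
      rcases List.mem_cons.mp hd' with rfl | h'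
      · exact hE d he
      · rw [List.eq_of_mem_replicate h']; exact hd₀D
    · rw [List.eq_of_mem_replicate h] at hd'
      rw [List.eq_of_mem_replicate hd']; exact hd₀D
  · -- length
    rw [hw, List.length_flatten,
      List.sum_eq_card_nsmul (blocks.map List.length) q
        (by intro x hx; obtain ⟨bl, hbl, rfl⟩ := List.mem_map.mp hx; exact hlenbl bl hbl)]
    simp [hblockslen]
    ring
  · -- value congruence
    set R := Nat.ofDigits g pad with hR
    have haR : a ∣ R := by
      rw [hR, hpad, ofDigits_replicate]
      exact Dvd.dvd.mul_left haG d₀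
    have hblk : ∀ e ∈ E, Nat.ofDigits g (blockfn e) = (e - d₀) + R := by
      intro e he
      have h1 : pad = d₀ :: List.replicate (q - 1) d₀ := by
        obtain ⟨q', hq'⟩ : ∃ q', q = q' + 1 := ⟨q - 1, by omega⟩
        rw [hpad, hq']
        simp [List.replicate_succ]
      have h2 : Nat.ofDigits g (blockfn e) = e + g * Nat.ofDigits g (List.replicate (q - 1) d₀) := by
        rw [hblockfn]; exact_mod_cast Nat.ofDigits_cons
      have h3 : R = d₀ + g * Nat.ofDigits g (List.replicate (q - 1) d₀) := by
        rw [hR, h1]; exact_mod_cast Nat.ofDigits_cons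
      have := hEd₀ e he
      omega
    have hmapE : ((E.map blockfn).map (Nat.ofDigits g)).sum = S + K * R := by
      rw [List.map_map]
      exact map_sum_shift (fun d => d - d₀) (Nat.ofDigits g ∘ blockfn) R E
        (fun e he => hblk e he)
    have hsum_blocks : (blocks.map (Nat.ofDigits g)).sum = S + (m * a') * R := by
      rw [hblocks, List.map_append, List.sum_append, hmapE, List.map_replicate,
        List.sum_replicate, smul_eq_mul]
      have : K * R + (m * a' - K) * R = (m * a') * R := by
        rw [← Nat.add_mul]
        congr 1
        omega
      rw [add_assoc, this]
    have hval : Nat.ofDigits g w ≡ S + (m * a') * R [MOD a] := by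
      rw [hw, ← hsum_blocks]
      exact ofDigits_flatten_mod g a q hqa blocks hlenbl
    have hdrop : S + (m * a') * R ≡ S [MOD a] := by
      have : (m * a') * R ≡ 0 [MOD a] :=
        (Nat.modEq_zero_iff_dvd).mpr (Dvd.dvd.mul_left haR _)
      simpa using Nat.ModEq.add_left S this
    have hSa : S ≡ c [MOD a] := hSc.of_dvd (Dvd.intro _ rfl)
    -- combine
    have h1 : g ^ i * Nat.ofDigits g w ≡ g ^ i * (b * g ^ (i * (q - 1))) [MOD a] :=
      Nat.ModEq.mul_left _ ((hval.trans hdrop).trans (hSa.trans hca))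
    have h2 : g ^ i * (b * g ^ (i * (q - 1))) = b * (g ^ q) ^ i := by
      rw [← pow_mul, ← mul_assoc, mul_comm (g ^ i) b, mul_assoc, ← pow_add]
      congr 2
      have h5 : q - 1 + 1 = q := by omega
      have h6 : i + i * (q - 1) = i * q := by
        calc i + i * (q - 1) = i * ((q - 1) + 1) := by ring
          _ = i * q := by rw [h5]
      rw [h6, mul_comm]
    have h3 : b * (g ^ q) ^ i ≡ b * 1 [MOD a] := by
      have h7 := Nat.ModEq.pow i hqa
      rw [one_pow] at h7
      exact Nat.ModEq.mul_left b h7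
    rw [h2] at h1
    calc g ^ i * Nat.ofDigits g w ≡ b * (g ^ q) ^ i [MOD a] := h1
      _ ≡ b * 1 [MOD a] := h3
      _ = b := by ring
  · -- digit sum congruence
    have hsum_blk : ∀ e ∈ E, (blockfn e).sum = (e - d₀) + q * d₀ := by
      intro e he
      have h1 : (blockfn e).sum = e + (q - 1) * d₀ := by
        simp [hblockfn, List.sum_replicate, smul_eq_mul]
      have h2 : (q - 1) * d₀ + d₀ = q * d₀ := by
        have : q - 1 + 1 = q := by omega
        calc (q - 1) * d₀ + d₀ = (q - 1 + 1) * d₀ := by ring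
          _ = q * d₀ := by rw [this]
      have := hEd₀ e he
      omega
    have hmapE : ((E.map blockfn).map List.sum).sum = S + K * (q * d₀) := by
      rw [List.map_map]
      exact map_sum_shift (fun d => d - d₀) (List.sum ∘ blockfn) (q * d₀) E hsum_blk
    have hws : w.sum = S + (m * a') * (q * d₀) := by
      rw [hw, List.sum_flatten, hblocks, List.map_append, List.sum_append, hmapE,
        List.map_replicate, List.sum_replicate, smul_eq_mul]
      have hpadsum : pad.sum = q * d₀ := by
        simp [hpad, List.sum_replicate, smul_eq_mul]
      rw [hpadsum]
      have : K * (q * d₀) + (m * a' - K) * (q * d₀) = (m * a') * (q * d₀) := by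
        rw [← Nat.add_mul]
        congr 1
        omega
      rw [add_assoc, this]
    rw [hws]
    have hdrop : S + (m * a') * (q * d₀) ≡ S [MOD a'] := by
      have : (m * a') * (q * d₀) ≡ 0 [MOD a'] :=
        (Nat.modEq_zero_iff_dvd).mpr ⟨m * (q * d₀), by ring⟩
      simpa using Nat.ModEq.add_left S this
    have hSa' : S ≡ c [MOD a'] := hSc.of_dvd ⟨a, by rw [hN]; ring⟩
    exact hdrop.trans (hSa'.trans hca')
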